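/- For Borel probability measures μ, ν on ℝ with distribution functions F_μ, F_ν, the function F(x) = max{t·F_μ(x) − (t−1), 0} is a cumulative distribution function on ℝ for every real t ≥ 1. -/

import Mathlib

open MeasureTheory ProbabilityTheory Filter Topology

theorem freeMaxPow_cdf (μ : Measure ℝ) [IsProbabilityMeasure μ] (t : ℝ) (ht : 1 ≤ t)
    (F : ℝ → ℝ) (hF : ∀ x, F x = max (t * cdf μ x - (t - 1)) 0) :
    Monotone F ∧ (∀ x, ContinuousWithinAt F (Set.Ici x) x) ∧
      Tendsto F atBot (nhds 0) ∧ Tendsto F atTop (nhds 1) := by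
  have ht0 : (0:ℝ) < t := lt_of_lt_of_le one_pos ht
  have hFeq : F = fun x => max (t * cdf μ x - (t - 1)) 0 := funext hF
  refine ⟨?_, ?_, ?_, ?_⟩
  · intro a b hab
    rw [hF a, hF b]
    exact max_le_max (by nlinarith [(cdf μ).mono hab]) le_rfl
  · intro x
    rw [hFeq]
    exact (continuous_max.comp ((continuous_const.mul continuous_id).sub continuous_const |>.prodMk continuous_const)).continuousAt.comp_continuousWithinAt ((cdf μ).right_continuous x)
  · rw [hFeq]
    have h := tendsto_cdf_atBot μ
    have : Tendsto (fun x => max (t * cdf μ x - (t - 1)) 0) atBot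
        (nhds (max (t * 0 - (t - 1)) 0)) :=
      ((tendsto_const_nhds.mul h).sub tendsto_const_nhds).max tendsto_const_nhds
    convert this using 2
    exact (max_eq_right (by linarith : t * 0 - (t-1) ≤ 0)).symm
  · rw [hFeq]
    have h := tendsto_cdf_atTop μ
    have : Tendsto (fun x => max (t * cdf μ x - (t - 1)) 0) atTop
        (nhds (max (t * 1 - (t - 1)) 0)) :=
      ((tendsto_const_nhds.mul h).sub tendsto_const_nhds).max tendsto_const_nhds
    simpa using this
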